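/- Let n be even and let S = conv{p¹, …, p^{n+1}} ⊂ ℝ^n be a regular n-simplex with vertices satisfying ‖pⁱ‖ = 1 for all i, p¹ + … + p^{n+1} = 0, and (pⁱ)ᵀpʲ = −1/n for all i ≠ j. Then S ∩ (−S) is optimally contained in (n/(n+1))·conv(S ∪ (−S)). -/

import Mathlib

open Pointwise RealInnerProductSpace

variable {E : Type*} [NormedAddCommGroup E] [InnerProductSpace ℝ E]

/-- `K` is optimally contained in `C`: `K ⊆ C` and there is no `ρ ∈ [0,1)` and
translation `t` with `K ⊆ ρ • C + {t}`. -/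
def OptCont (K C : Set E) : Prop :=
  K ⊆ C ∧ ¬∃ ρ : ℝ, 0 ≤ ρ ∧ ρ < 1 ∧ ∃ t : E, K ⊆ ρ • C + {t}

/-- The polar set `C° = {a | ∀ x ∈ C, ⟪a,x⟫ ≤ 1}`. -/
def polarSet (C : Set E) : Set E := {a : E | ∀ x ∈ C, ⟪a, x⟫ ≤ 1}

/-- The Minkowski asymmetry of `C`. -/
noncomputable def minkAsym (C : Set E) : ℝ :=
  sInf {ρ : ℝ | 0 < ρ ∧ ∃ c : E, C - {c} ⊆ ρ • ({c} - C)}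

/-- `C` is Minkowski centered if `C ⊆ s(C) • (-C)`. -/
def MinkCentered (C : Set E) : Prop := C ⊆ minkAsym C • (-C)

private lemma mem_convexHull_range_iff' {E : Type*} [AddCommGroup E] [Module ℝ E]
    {ι : Type*} [Fintype ι] (v : ι → E) (x : E) :
    x ∈ convexHull ℝ (Set.range v) ↔
      ∃ w : ι → ℝ, (∀ i, 0 ≤ w i) ∧ ∑ i, w i = 1 ∧ ∑ i, w i • v i = x := by
  classical
  constructor
  · intro hx
    rw [convexHull_range_eq_exists_affineCombination] at hx
    obtain ⟨s, w, hw0, hw1, hx⟩ := hx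
    refine ⟨fun i => if i ∈ s then w i else 0, ?_, ?_, ?_⟩
    · intro i
      by_cases h : i ∈ s <;> simp [h]
      exact hw0 i h
    · rw [Finset.sum_ite_mem, Finset.univ_inter, hw1]
    · rw [← hx, s.affineCombination_eq_linear_combination v w hw1]
      rw [← Finset.sum_subset (Finset.subset_univ s)
        (by intro i _ hi; simp [hi])]
      exact Finset.sum_congr rfl (fun i hi => by simp [hi])
  · rintro ⟨w, hw0, hw1, rfl⟩
    rw [← Finset.univ.centerMass_eq_of_sum_1 _ hw1]
    exact Finset.univ.centerMass_mem_convexHull (fun i _ => hw0 i) (hw1 ▸ one_pos)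
      (fun i _ => Set.mem_range_self i)

private lemma sumabs {n : ℕ} (hn : Even n) (s : Fin (n+1) → ℝ)
    (hb : ∀ i, |s i| ≤ 1/(n+1)) (h0 : ∑ i, s i = 0) :
    ∑ i, |s i| ≤ n/(n+1) := by
  classical
  set P : Finset (Fin (n+1)) := Finset.univ.filter (fun i => 0 < s i) with hP
  have hsplit : ∑ i ∈ P, s i + ∑ i ∈ Pᶜ, s i = 0 := by
    rw [Finset.sum_add_sum_compl]; exact h0
  have habs : ∑ i, |s i| = ∑ i ∈ P, s i + ∑ i ∈ Pᶜ, (-s i) := by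
    rw [← Finset.sum_add_sum_compl P (fun i => |s i|)]
    congr 1
    · exact Finset.sum_congr rfl (fun i hi => abs_of_pos (by simpa [hP] using hi))
    · refine Finset.sum_congr rfl (fun i hi => abs_of_nonpos ?_)
      simp only [hP, Finset.mem_compl, Finset.mem_filter, Finset.mem_univ, true_and, not_lt] at hi
      exact hi
  have hb' : ∀ i, s i ≤ 1/(n+1) := fun i => (abs_le.mp (hb i)).2
  have hb'' : ∀ i, -s i ≤ 1/(n+1) := fun i => by
    have := (abs_le.mp (hb i)).1; linarith
  have h1 : ∑ i ∈ P, s i ≤ P.card * (1/(n+1)) := by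
    calc ∑ i ∈ P, s i ≤ ∑ i ∈ P, (1/(n+1):ℝ) := Finset.sum_le_sum (fun i _ => hb' i)
    _ = P.card * (1/(n+1)) := by rw [Finset.sum_const, nsmul_eq_mul]
  have h2 : ∑ i ∈ Pᶜ, (-s i) ≤ Pᶜ.card * (1/(n+1)) := by
    calc ∑ i ∈ Pᶜ, (-s i) ≤ ∑ i ∈ Pᶜ, (1/(n+1):ℝ) := Finset.sum_le_sum (fun i _ => hb'' i)
    _ = Pᶜ.card * (1/(n+1)) := by rw [Finset.sum_const, nsmul_eq_mul]
  have heq : ∑ i ∈ Pᶜ, (-s i) = ∑ i ∈ P, s i := by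
    rw [Finset.sum_neg_distrib]; linarith
  have hcard : P.card + Pᶜ.card = n + 1 := by
    rw [Finset.card_add_card_compl]; simp
  obtain ⟨k, hk⟩ := hn
  have hmin : 2 * min P.card Pᶜ.card ≤ n := by omega
  have hA : 2 * (∑ i ∈ P, s i) ≤ (n:ℝ) * (1/(n+1)) := by
    have hm : (∑ i ∈ P, s i) ≤ ((min P.card Pᶜ.card : ℕ) : ℝ) * (1/(n+1)) := by
      rcases min_cases P.card Pᶜ.card with ⟨hm1, _⟩ | ⟨hm1, _⟩ <;> rw [hm1]
      · exact h1
      · rw [← heq]; exact h2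
    have h2m : (2:ℝ) * ((min P.card Pᶜ.card : ℕ):ℝ) ≤ (n:ℝ) := by exact_mod_cast hmin
    nlinarith [(by positivity : (0:ℝ) < 1/((n:ℝ)+1))]
  rw [habs, heq]
  calc ∑ i ∈ P, s i + ∑ i ∈ P, s i = 2 * ∑ i ∈ P, s i := by ring
  _ ≤ (n:ℝ) * (1/(n+1)) := hA
  _ = n/(n+1) := by ring

private lemma inner_combo {n : ℕ} (hn : (n:ℝ) ≠ 0) {E : Type*} [NormedAddCommGroup E]
    [InnerProductSpace ℝ E] (p : Fin (n+1) → E)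
    (gram : ∀ i j, (⟪p i, p j⟫ : ℝ) = if i = j then 1 else -1/(n:ℝ))
    (c : Fin (n+1) → ℝ) (i : Fin (n+1)) :
    (⟪p i, ∑ j, c j • p j⟫ : ℝ) = ((n+1) * c i - ∑ j, c j)/n := by
  classical
  rw [inner_sum]
  simp_rw [real_inner_smul_right, gram]
  have step : ∀ j ∈ Finset.univ, c j * (if i = j then (1:ℝ) else -1/n)
      = c j * (-1/n) + (if j = i then c j * (1+1/n) else 0) := by
    intro j _
    by_cases h : i = j
    · subst h; simp; ring
    · simp [h, Ne.symm h]
  rw [Finset.sum_congr rfl step, Finset.sum_add_distrib, Finset.sum_ite_eq' Finset.univ i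
    (fun j => c j * (1+1/n))]
  simp only [Finset.mem_univ, if_true, ← Finset.sum_mul]
  field_simp
  ring

private lemma signed_combo_mem {E : Type*} [NormedAddCommGroup E] [InnerProductSpace ℝ E]
    {m : ℕ} (p : Fin m → E) (hm : 0 < m) (t : Fin m → ℝ) (ht : ∑ i, |t i| ≤ 1) :
    (∑ i, t i • p i) ∈ convexHull ℝ (Set.range p ∪ -Set.range p) := by
  classical
  have hmR : (0:ℝ) < m := by exact_mod_cast hm
  set δ : ℝ := (1 - ∑ i, |t i|) / (2 * m) with hδ
  have hδ0 : 0 ≤ δ := by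
    apply div_nonneg (by linarith) (by positivity)
  set w : Fin m × Bool → ℝ := fun q => if q.2 then (|t q.1| + t q.1)/2 + δ
    else (|t q.1| - t q.1)/2 + δ with hw
  set z : Fin m × Bool → E := fun q => if q.2 then p q.1 else -(p q.1) with hz
  have hw0 : ∀ q, 0 ≤ w q := by
    rintro ⟨i, b⟩
    have h1 := neg_abs_le (t i)
    have h2 := le_abs_self (t i)
    cases b <;> simp only [hw, if_true, if_false, Bool.false_eq_true] <;> linarith
  have hw1 : ∑ q, w q = 1 := by
    rw [Fintype.sum_prod_type]
    simp only [Fintype.sum_bool, hw, if_true, if_false, Bool.false_eq_true]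
    have : ∀ i ∈ Finset.univ, ((|t i| + t i)/2 + δ) + ((|t i| - t i)/2 + δ)
        = |t i| + 2 * δ := by intro i _; ring
    rw [Finset.sum_congr rfl this, Finset.sum_add_distrib, Finset.sum_const,
      Finset.card_univ, Fintype.card_fin, nsmul_eq_mul, hδ]
    field_simp
    ring
  have hsum : ∑ q, w q • z q = ∑ i, t i • p i := by
    rw [Fintype.sum_prod_type]
    simp only [Fintype.sum_bool, hw, hz, if_true, if_false, Bool.false_eq_true]
    apply Finset.sum_congr rfl
    intro i _
    rw [smul_neg, ← sub_eq_add_neg, ← sub_smul]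
    congr 1
    ring
  rw [← hsum, ← Finset.univ.centerMass_eq_of_sum_1 _ hw1]
  refine Finset.univ.centerMass_mem_convexHull (fun q _ => hw0 q) (hw1 ▸ one_pos) ?_
  rintro ⟨i, b⟩ _
  cases b
  · simp only [hz, Bool.false_eq_true, if_false]
    exact Set.mem_union_right _ (Set.neg_mem_neg.mpr (Set.mem_range_self i))
  · exact Set.mem_union_left _ (Set.mem_range_self i)

private lemma sum_pattern (k : ℕ) (a b : ℝ) :
    ∑ i ∈ Finset.range (k + k + 1), (if i < k then a else if i < k + k then b else 0)
      = k * a + k * b := by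
  rw [Finset.sum_range_succ]
  have hlast : (if k + k < k then a else if k + k < k + k then b else 0) = 0 := by
    simp
  rw [hlast, add_zero, Finset.range_eq_Ico,
    ← Finset.sum_Ico_consecutive _ (Nat.zero_le k) (Nat.le_add_right k k)]
  have e1 : ∑ i ∈ Finset.Ico 0 k, (if i < k then a else if i < k + k then b else 0)
      = k * a := by
    rw [Finset.sum_congr rfl (fun i hi => ?_), Finset.sum_const, Nat.card_Ico,
      Nat.sub_zero, nsmul_eq_mul]
    have : i < k := (Finset.mem_Ico.mp hi).2
    simp [this]
  have e2 : ∑ i ∈ Finset.Ico k (k + k), (if i < k then a else if i < k + k then b else 0)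
      = k * b := by
    rw [Finset.sum_congr rfl (fun i hi => ?_), Finset.sum_const, Nat.card_Ico, nsmul_eq_mul]
    · have hkk : k + k - k = k := by omega
      rw [hkk]
    · obtain ⟨h1, h2⟩ := Finset.mem_Ico.mp hi
      have hn1 : ¬ i < k := by omega
      simp [hn1, h2]
  rw [e1, e2]

theorem stmt_17 {n : ℕ} (hn : Even n) (p : Fin (n + 1) → EuclideanSpace ℝ (Fin n))
    (hnorm : ∀ i, ‖p i‖ = 1) (hsum : ∑ i, p i = 0)
    (hip : ∀ i j, i ≠ j → (⟪p i, p j⟫ : ℝ) = -1 / n)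
    (S : Set (EuclideanSpace ℝ (Fin n))) (hS : S = convexHull ℝ (Set.range p)) :
    OptCont (S ∩ -S) (((n : ℝ) / (n + 1)) • convexHull ℝ (S ∪ -S)) := by
  classical
  rcases Nat.eq_zero_or_pos n with hzero | hnpos
  · exfalso
    subst hzero
    have h1 := hnorm 0
    have hp0 : p 0 = 0 := by
      ext i
      exact i.elim0
    rw [hp0, norm_zero] at h1
    norm_num at h1
  have hn0 : (n:ℝ) ≠ 0 := Nat.cast_ne_zero.mpr (by omega)
  have hnR : (0:ℝ) < n := by exact_mod_cast hnpos
  have hn1R : (0:ℝ) < (n:ℝ) + 1 := by positivity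
  have hrpos : (0:ℝ) < (n:ℝ)/(n+1) := by positivity
  have gram : ∀ i j, (⟪p i, p j⟫ : ℝ) = if i = j then 1 else -1/(n:ℝ) := by
    intro i j
    by_cases h : i = j
    · subst h
      rw [if_pos rfl, real_inner_self_eq_norm_mul_norm, hnorm i, one_mul]
    · rw [if_neg h, hip i j h]
  have hCH : convexHull ℝ (S ∪ -S) = convexHull ℝ (Set.range p ∪ -Set.range p) := by
    rw [hS, ← convexHull_neg, convexHull_convexHull_union_left,
      convexHull_convexHull_union_right]
  constructor
  · -- containment
    rintro x ⟨hxS, hxnS⟩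
    rw [hS] at hxS
    have hxnS' : -x ∈ convexHull ℝ (Set.range p) := by
      rw [hS] at hxnS; exact Set.mem_neg.mp hxnS
    obtain ⟨lam, hl0, hl1, hlx⟩ := (mem_convexHull_range_iff' p x).1 hxS
    obtain ⟨mu, hm0, hm1, hmx⟩ := (mem_convexHull_range_iff' p (-x)).1 hxnS'
    have key : ∀ i, lam i + mu i = 2/((n:ℝ)+1) := by
      intro i
      have h1 := inner_combo hn0 p gram lam i
      rw [hlx, hl1] at h1
      have h2 := inner_combo hn0 p gram mu i
      rw [hmx, hm1, inner_neg_right] at h2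
      have hsum2 : ((((n:ℝ)+1) * lam i - 1)/n) + ((((n:ℝ)+1) * mu i - 1)/n) = 0 := by
        rw [← h1, ← h2]; ring
      field_simp at hsum2 ⊢
      linarith
    set s : Fin (n+1) → ℝ := fun i => lam i - 1/((n:ℝ)+1) with hsdef
    have hsb : ∀ i, |s i| ≤ 1/((n:ℝ)+1) := by
      intro i
      rw [abs_le]
      have h1 := hl0 i
      have h2 := hm0 i
      have h3 := key i
      have h4 : 2/((n:ℝ)+1) = 2*(1/((n:ℝ)+1)) := by ring
      constructor <;> simp only [hsdef] <;> linarith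
    have hs0 : ∑ i, s i = 0 := by
      simp only [hsdef]
      rw [Finset.sum_sub_distrib, hl1, Finset.sum_const, Finset.card_univ,
        Fintype.card_fin, nsmul_eq_mul]
      field_simp
      push_cast; ring
    have hsx : ∑ i, s i • p i = x := by
      simp only [hsdef, sub_smul]
      rw [Finset.sum_sub_distrib, hlx, ← Finset.smul_sum, hsum, smul_zero, sub_zero]
    have hsa : ∑ i, |s i| ≤ (n:ℝ)/(n+1) := sumabs hn s hsb hs0
    rw [hCH, Set.mem_smul_set]
    refine ⟨∑ i, (s i / ((n:ℝ)/(n+1))) • p i, ?_, ?_⟩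
    · apply signed_combo_mem p (by omega)
      have : ∀ i ∈ Finset.univ, |s i / ((n:ℝ)/(n+1))| = |s i| / ((n:ℝ)/(n+1)) := by
        intro i _
        rw [abs_div, abs_of_pos hrpos]
      rw [Finset.sum_congr rfl this, ← Finset.sum_div]
      rw [div_le_one hrpos]
      exact hsa
    · rw [Finset.smul_sum]
      rw [← hsx]
      apply Finset.sum_congr rfl
      intro i _
      rw [smul_smul, mul_div_cancel₀ _ (ne_of_gt hrpos)]
  · -- optimality
    rintro ⟨ρ, hρ0, hρ1, t, ht⟩
    rw [hCH] at ht
    obtain ⟨k, hkeq⟩ := hn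
    have hk1 : 1 ≤ k := by omega
    set f : ℕ → ℝ := fun i => if i < k then 1 else if i < k + k then -1 else 0 with hf
    set e : Fin (n+1) → ℝ := fun i => f i.val with he
    have hesum : ∑ i, e i = 0 := by
      simp only [he]
      rw [Fin.sum_univ_eq_sum_range f (n+1)]
      have : n + 1 = k + k + 1 := by omega
      rw [this, hf, sum_pattern k 1 (-1)]
      ring
    have he2 : ∑ i, e i * e i = (n:ℝ) := by
      have hpt : ∀ i : Fin (n+1), e i * e i
          = (fun j => if j < k then (1:ℝ) else if j < k + k then 1 else 0) i.val := by
        intro i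
        simp only [he, hf]
        split_ifs <;> norm_num
      rw [Finset.sum_congr rfl (fun i _ => hpt i),
        Fin.sum_univ_eq_sum_range (fun j => if j < k then (1:ℝ) else if j < k + k then 1 else 0)
          (n+1)]
      have : n + 1 = k + k + 1 := by omega
      rw [this, sum_pattern k 1 1]
      have : ((n:ℝ)) = (k:ℝ) + (k:ℝ) := by exact_mod_cast congrArg (Nat.cast : ℕ → ℝ) hkeq
      rw [this]; ring
    have heabs : ∀ i, |e i| ≤ 1 := by
      intro i
      simp only [he, hf]
      split_ifs <;> norm_num
    set u : EuclideanSpace ℝ (Fin n) := ∑ i, e i • p i with hu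
    have hpu : ∀ j, (⟪p j, u⟫ : ℝ) = e j * (((n:ℝ)+1)/n) := by
      intro j
      rw [hu, inner_combo hn0 p gram e j, hesum]
      field_simp
      ring
    have huu : (⟪u, u⟫ : ℝ) = (n:ℝ) + 1 := by
      rw [hu, sum_inner]
      have : ∀ j ∈ Finset.univ, (⟪e j • p j, u⟫:ℝ) = e j * (e j * (((n:ℝ)+1)/n)) := by
        intro j _
        rw [real_inner_smul_left, hpu j]
      rw [Finset.sum_congr rfl this]
      have : ∀ j ∈ Finset.univ, e j * (e j * (((n:ℝ)+1)/n)) = (e j * e j) * (((n:ℝ)+1)/n) := by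
        intro j _; ring
      rw [Finset.sum_congr rfl this, ← Finset.sum_mul, he2]
      field_simp
    set xp : EuclideanSpace ℝ (Fin n) := (1/((n:ℝ)+1)) • u with hxp
    have hux : (⟪u, xp⟫ : ℝ) = 1 := by
      rw [hxp, real_inner_smul_right, huu]
      field_simp
    -- xp ∈ S
    have hxpS : xp ∈ convexHull ℝ (Set.range p) := by
      apply (mem_convexHull_range_iff' p xp).2
      refine ⟨fun i => (e i + 1)/((n:ℝ)+1), ?_, ?_, ?_⟩
      · intro i
        have := (abs_le.mp (heabs i)).1
        apply div_nonneg (by linarith) (le_of_lt hn1R)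
      · rw [← Finset.sum_div]
        rw [Finset.sum_add_distrib, hesum, Finset.sum_const, Finset.card_univ,
          Fintype.card_fin, nsmul_eq_mul, mul_one, zero_add]
        push_cast
        field_simp
      · have : ∀ i ∈ Finset.univ, ((e i + 1)/((n:ℝ)+1)) • p i
            = (1/((n:ℝ)+1)) • (e i • p i) + (1/((n:ℝ)+1)) • p i := by
          intro i _
          rw [smul_smul, ← add_smul]
          congr 1
          field_simp
        rw [Finset.sum_congr rfl this, Finset.sum_add_distrib, ← Finset.smul_sum,
          ← Finset.smul_sum, hsum, smul_zero, add_zero, hxp, hu]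
    have hxpS' : -xp ∈ convexHull ℝ (Set.range p) := by
      apply (mem_convexHull_range_iff' p (-xp)).2
      refine ⟨fun i => (1 - e i)/((n:ℝ)+1), ?_, ?_, ?_⟩
      · intro i
        have := (abs_le.mp (heabs i)).2
        apply div_nonneg (by linarith) (le_of_lt hn1R)
      · rw [← Finset.sum_div]
        rw [Finset.sum_sub_distrib, hesum, Finset.sum_const, Finset.card_univ,
          Fintype.card_fin, nsmul_eq_mul, mul_one, sub_zero]
        push_cast
        field_simp
      · have : ∀ i ∈ Finset.univ, ((1 - e i)/((n:ℝ)+1)) • p i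
            = (1/((n:ℝ)+1)) • p i - (1/((n:ℝ)+1)) • (e i • p i) := by
          intro i _
          rw [smul_smul, ← sub_smul]
          congr 1
          field_simp
        rw [Finset.sum_congr rfl this, Finset.sum_sub_distrib, ← Finset.smul_sum,
          ← Finset.smul_sum, hsum, smul_zero, zero_sub, hxp, hu]
    -- support bounds
    have hlin : IsLinearMap ℝ (fun y : EuclideanSpace ℝ (Fin n) => (⟪u, y⟫ : ℝ)) :=
      ⟨fun a b => inner_add_right u a b, fun c a => real_inner_smul_right u a c⟩
    have hub : ∀ y ∈ convexHull ℝ (Set.range p ∪ -Set.range p),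
        (⟪u, y⟫:ℝ) ≤ ((n:ℝ)+1)/n := by
      apply convexHull_min ?_ (convex_halfSpace_le hlin _)
      rintro y (⟨j, rfl⟩ | hy)
      · simp only [Set.mem_setOf_eq]
        rw [real_inner_comm, hpu j]
        have h1 := (abs_le.mp (heabs j)).2
        have hpos : (0:ℝ) < ((n:ℝ)+1)/n := by positivity
        calc e j * (((n:ℝ)+1)/n) ≤ 1 * (((n:ℝ)+1)/n) :=
              mul_le_mul_of_nonneg_right h1 (le_of_lt hpos)
        _ = ((n:ℝ)+1)/n := one_mul _
      · obtain ⟨j, hj⟩ := Set.mem_neg.mp hy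
        have hyj : y = -(p j) := by rw [hj, neg_neg]
        simp only [Set.mem_setOf_eq]
        rw [hyj, inner_neg_right, real_inner_comm, hpu j]
        have h1 := (abs_le.mp (heabs j)).1
        have hpos : (0:ℝ) < ((n:ℝ)+1)/n := by positivity
        calc -(e j * (((n:ℝ)+1)/n)) = (-e j) * (((n:ℝ)+1)/n) := by ring
        _ ≤ 1 * (((n:ℝ)+1)/n) := mul_le_mul_of_nonneg_right (by linarith) (le_of_lt hpos)
        _ = ((n:ℝ)+1)/n := one_mul _
    have hlb : ∀ y ∈ convexHull ℝ (Set.range p ∪ -Set.range p),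
        -(((n:ℝ)+1)/n) ≤ (⟪u, y⟫:ℝ) := by
      apply convexHull_min ?_ (convex_halfSpace_ge hlin _)
      rintro y (⟨j, rfl⟩ | hy)
      · simp only [Set.mem_setOf_eq]
        rw [real_inner_comm, hpu j]
        have h1 := (abs_le.mp (heabs j)).1
        have hpos : (0:ℝ) < ((n:ℝ)+1)/n := by positivity
        calc -(((n:ℝ)+1)/n) = (-1) * (((n:ℝ)+1)/n) := by ring
        _ ≤ e j * (((n:ℝ)+1)/n) := mul_le_mul_of_nonneg_right h1 (le_of_lt hpos)
      · obtain ⟨j, hj⟩ := Set.mem_neg.mp hy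
        have hyj : y = -(p j) := by rw [hj, neg_neg]
        simp only [Set.mem_setOf_eq]
        rw [hyj, inner_neg_right, real_inner_comm, hpu j]
        have h1 := (abs_le.mp (heabs j)).2
        have hpos : (0:ℝ) < ((n:ℝ)+1)/n := by positivity
        calc -(((n:ℝ)+1)/n) = -(1 * (((n:ℝ)+1)/n)) := by ring
        _ ≤ -(e j * (((n:ℝ)+1)/n)) := by
              have := mul_le_mul_of_nonneg_right h1 (le_of_lt hpos)
              linarith
    have hr1 : ((n:ℝ)/(n+1)) * (((n:ℝ)+1)/n) = 1 := by field_simp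
    have hxpK : xp ∈ S ∩ -S := by
      constructor
      · rw [hS]; exact hxpS
      · rw [Set.mem_neg, hS]; exact hxpS'
    have hmxpK : -xp ∈ S ∩ -S := by
      constructor
      · rw [hS]; exact hxpS'
      · rw [Set.mem_neg, neg_neg, hS]; exact hxpS
    obtain ⟨a, ha, b, hb, hab⟩ := ht hxpK
    rw [Set.mem_singleton_iff] at hb
    rw [hb] at hab
    obtain ⟨y1, hy1, rfl⟩ := Set.mem_smul_set.mp ha
    obtain ⟨z1, hz1, rfl⟩ := Set.mem_smul_set.mp hy1
    obtain ⟨a2, ha2, b2, hb2, hab2⟩ := ht hmxpK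
    rw [Set.mem_singleton_iff] at hb2
    rw [hb2] at hab2
    obtain ⟨y2, hy2, rfl⟩ := Set.mem_smul_set.mp ha2
    obtain ⟨z2, hz2, rfl⟩ := Set.mem_smul_set.mp hy2
    have e1 : (1:ℝ) = ρ * (((n:ℝ)/(n+1)) * ⟪u, z1⟫) + ⟪u, t⟫ := by
      conv_lhs => rw [← hux]
      rw [← hab]
      rw [inner_add_right, real_inner_smul_right, real_inner_smul_right]
    have e2 : (-1:ℝ) = ρ * (((n:ℝ)/(n+1)) * ⟪u, z2⟫) + ⟪u, t⟫ := by
      have hmx : (⟪u, -xp⟫:ℝ) = -1 := by rw [inner_neg_right, hux]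
      conv_lhs => rw [← hmx]
      rw [← hab2]
      rw [inner_add_right, real_inner_smul_right, real_inner_smul_right]
    have hz1b : ((n:ℝ)/(n+1)) * ⟪u, z1⟫ ≤ 1 := by
      calc ((n:ℝ)/(n+1)) * ⟪u, z1⟫ ≤ ((n:ℝ)/(n+1)) * (((n:ℝ)+1)/n) :=
        mul_le_mul_of_nonneg_left (hub z1 hz1) (le_of_lt hrpos)
      _ = 1 := hr1
    have hz2b : (-1:ℝ) ≤ ((n:ℝ)/(n+1)) * ⟪u, z2⟫ := by
      calc (-1:ℝ) = ((n:ℝ)/(n+1)) * (-(((n:ℝ)+1)/n)) := by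
            rw [mul_neg, hr1]
      _ ≤ ((n:ℝ)/(n+1)) * ⟪u, z2⟫ :=
        mul_le_mul_of_nonneg_left (hlb z2 hz2) (le_of_lt hrpos)
    have hq1 : ρ * (((n:ℝ)/(n+1)) * ⟪u, z1⟫) ≤ ρ := by
      calc ρ * (((n:ℝ)/(n+1)) * ⟪u, z1⟫) ≤ ρ * 1 := mul_le_mul_of_nonneg_left hz1b hρ0
      _ = ρ := mul_one ρ
    have hq2 : -ρ ≤ ρ * (((n:ℝ)/(n+1)) * ⟪u, z2⟫) := by
      calc -ρ = ρ * (-1) := by ring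
      _ ≤ ρ * (((n:ℝ)/(n+1)) * ⟪u, z2⟫) := mul_le_mul_of_nonneg_left hz2b hρ0
    linarith
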